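/- Let H, K be abelian groups and Φ = {φ_{i,j} ∈ Aut(K) : i,j ∈ H} a family of automorphisms satisfying φ_{i,j} = φ_{j,i} and φ_{0,i} = id_K for all i,j. Then the operation (a,i) ⋆ (b,j) = (φ_{i,j}(a+b), i+j) on Q = K × H is a commutative loop with identity (0,0), and K × {0} is a subloop isomorphic to K, {0} × H is a subloop isomorphic to H. -/

import Mathlib

/-- Let `H, K` be abelian groups and `φ_{i,j} ∈ Aut K` with
`φ_{i,j} = φ_{j,i}` and `φ_{0,i} = id`. Then
`(a,i) ⋆ (b,j) = (φ_{i,j}(a+b), i+j)` on `Q = K × H` is a commutative loop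
with identity `(0,0)` (translations are bijective), `K × {0}` is a subloop
isomorphic to `K` (via `a ↦ (a,0)`), and `{0} × H` is a subloop isomorphic
to `H` (via `i ↦ (0,i)`). -/
theorem nuclear_product_loop (K H : Type*) [AddCommGroup K] [AddCommGroup H]
    (φ : H → H → AddAut K)
    (hsymm : ∀ i j : H, φ i j = φ j i)
    (hzero : ∀ i : H, φ 0 i = (0 : AddAut K)) :
    (let m : K × H → K × H → K × H :=
       fun x y => (φ x.2 y.2 (x.1 + y.1), x.2 + y.2)
     (∀ x y : K × H, m x y = m y x) ∧
     (∀ x : K × H, m 0 x = x ∧ m x 0 = x) ∧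
     (∀ u : K × H, Function.Bijective (fun x => m u x) ∧
        Function.Bijective (fun x => m x u)) ∧
     (∀ a b : K, m (a, 0) (b, 0) = (a + b, 0)) ∧
     (∀ i j : H, m (0, i) (0, j) = (0, i + j))) := by
  intro m
  have hzero' : ∀ i : H, φ i 0 = (0 : AddAut K) := fun i => (hsymm i 0).trans (hzero i)
  refine ⟨?_, ?_, ?_, ?_, ?_⟩
  · intro x y
    simp only [m, hsymm x.2 y.2, add_comm]
  · intro x
    constructor
    · show (φ (0:H) x.2 ((0:K) + x.1), (0:H) + x.2) = x
      rw [hzero, zero_add, zero_add]; rfl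
    · show (φ x.2 (0:H) (x.1 + (0:K)), x.2 + (0:H)) = x
      rw [hzero', add_zero, add_zero]; rfl
  · intro u
    have hL : Function.Bijective (fun x => m u x) := by
      apply Function.bijective_iff_has_inverse.2
      refine ⟨fun y => ((φ u.2 (y.2 - u.2)).symm y.1 - u.1, y.2 - u.2), ?_, ?_⟩
      · intro x
        simp only [m, add_sub_cancel_left, AddEquiv.symm_apply_apply,
          add_sub_cancel_left]
      · intro y
        simp only [m, add_sub_cancel,
          show ∀ c : K, u.1 + (c - u.1) = c from fun c => by abel,
          AddEquiv.apply_symm_apply]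
    refine ⟨hL, ?_⟩
    have : (fun x => m x u) = fun x => m u x := by
      funext x; simp only [m, hsymm x.2 u.2, add_comm]
    rw [this]; exact hL
  · intro a b
    show (φ (0:H) 0 (a + b), (0:H) + 0) = (a + b, 0)
    rw [hzero, add_zero]; rfl
  · intro i j
    show (φ i j ((0:K) + 0), i + j) = (0, i + j)
    rw [add_zero, map_zero]
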